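/- Let (Fₙ) be a nested cofinal sequence of entourages in the coarse structure of Y, ε > 0, and let (tₙ) be a family of pairwise orthogonal contractions on H_Y such that tₙ is not ε-Fₙ-quasi-local for every n. Then there exists K ⊆ ℕ such that the SOT-sum Σ_{k∈K} t_k is not quasi-local. -/

import Mathlib

open ContinuousLinearMap
open scoped InnerProductSpace

/-- Composition of relations. -/
def relComp {X Y Z : Type*} (S : Set (Z × Y)) (R : Set (Y × X)) : Set (Z × X) :=
  {p | ∃ y, (p.1, y) ∈ S ∧ (y, p.2) ∈ R}

/-- Transposition of a relation. -/
def relOp {X Y : Type*} (R : Set (Y × X)) : Set (X × Y) := {p | (p.2, p.1) ∈ R}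

/-- Image of a set under a relation: `R(A) = {y | ∃ x ∈ A, (y,x) ∈ R}`. -/
def relImage {X Y : Type*} (R : Set (Y × X)) (A : Set X) : Set Y :=
  {y | ∃ x ∈ A, (y, x) ∈ R}

/-- A coarse structure on a set `X`. -/
structure CoarseStructure (X : Type*) where
  ents : Set (Set (X × X))
  mem_of_subset : ∀ {E F : Set (X × X)}, E ∈ ents → F ⊆ E → F ∈ ents
  union_mem : ∀ {E F : Set (X × X)}, E ∈ ents → F ∈ ents → E ∪ F ∈ ents
  diag_mem : {p : X × X | p.1 = p.2} ∈ ents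
  op_mem : ∀ {E : Set (X × X)}, E ∈ ents → relOp E ∈ ents
  comp_mem : ∀ {E F : Set (X × X)}, E ∈ ents → F ∈ ents → relComp E F ∈ ents

/-- A coarse geometric module for a coarse space `(X, 𝓔)`: a Hilbert space `H` together with
a nondegenerate unital representation of a unital Boolean algebra of subsets of `X` by
orthogonal projections. -/
structure CoarseModule {X : Type*} (𝓔 : CoarseStructure X) (H : Type*)
    [NormedAddCommGroup H] [InnerProductSpace ℂ H] [CompleteSpace H] where
  meas : Set (Set X)
  univ_mem : Set.univ ∈ meas
  inter_mem : ∀ {A B : Set X}, A ∈ meas → B ∈ meas → A ∩ B ∈ meas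
  compl_mem : ∀ {A : Set X}, A ∈ meas → Aᶜ ∈ meas
  proj : Set X → H →L[ℂ] H
  proj_idem : ∀ A ∈ meas, IsIdempotentElem (proj A)
  proj_sa : ∀ A ∈ meas, IsSelfAdjoint (proj A)
  proj_inter : ∀ A ∈ meas, ∀ B ∈ meas, proj (A ∩ B) = (proj A).comp (proj B)
  proj_union : ∀ A ∈ meas, ∀ B ∈ meas, A ∩ B = ∅ → proj (A ∪ B) = proj A + proj B
  proj_univ : proj Set.univ = 1
  nondegenerate : ∃ E ∈ 𝓔.ents, relOp E = E ∧ {p : X × X | p.1 = p.2} ⊆ E ∧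
    (Submodule.span ℂ {v : H | ∃ A ∈ meas, A ×ˢ A ⊆ E ∧ v ∈ Set.range (proj A)}).topologicalClosure = ⊤

variable {X Y : Type*} {𝓔 : CoarseStructure X} {𝓕 : CoarseStructure Y}
  {HX HY : Type*}
  [NormedAddCommGroup HX] [InnerProductSpace ℂ HX] [CompleteSpace HX]
  [NormedAddCommGroup HY] [InnerProductSpace ℂ HY] [CompleteSpace HY]

/-- The support of an operator `t : H_X → H_Y` is contained in `S ⊆ Y × X` if
`χ_B ∘ t ∘ χ_A = 0` for all measurable `A ⊆ X`, `B ⊆ Y` with `B ∩ S(A) = ∅`. -/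
def SuppIn (MX : CoarseModule 𝓔 HX) (MY : CoarseModule 𝓕 HY)
    (t : HX →L[ℂ] HY) (S : Set (Y × X)) : Prop :=
  ∀ A ∈ MX.meas, ∀ B ∈ MY.meas, B ∩ relImage S A = ∅ →
    (MY.proj B).comp (t.comp (MX.proj A)) = 0

/-- An operator `t` on `H_Y` is `ε`-`F`-quasi-local if `‖χ_{A'} t χ_A‖ ≤ ε` for all
measurable `A, A'` with `A' ∩ F(A) = ∅`. -/
def IsQuasiLocalWith (M : CoarseModule 𝓕 HY) (t : HY →L[ℂ] HY) (ε : ℝ)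
    (F : Set (Y × Y)) : Prop :=
  ∀ A ∈ M.meas, ∀ A' ∈ M.meas, A' ∩ relImage F A = ∅ →
    ‖(M.proj A').comp (t.comp (M.proj A))‖ ≤ ε

/-- `t` is quasi-local if for every `ε > 0` there is an entourage `F` with `t`
`ε`-`F`-quasi-local. -/
def IsQuasiLocal (M : CoarseModule 𝓕 HY) (t : HY →L[ℂ] HY) : Prop :=
  ∀ ε : ℝ, 0 < ε → ∃ F ∈ 𝓕.ents, IsQuasiLocalWith M t ε F

section AuxPyth
variable {H : Type*} [NormedAddCommGroup H] [InnerProductSpace ℂ H]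

lemma aux_pyth (u : Finset ℕ) (h : ℕ → H)
    (ho : ∀ i ∈ u, ∀ j ∈ u, i ≠ j → ⟪h i, h j⟫_ℂ = 0) :
    ‖∑ k ∈ u, h k‖ ^ 2 = ∑ k ∈ u, ‖h k‖ ^ 2 := by
  have key : RCLike.re ⟪∑ k ∈ u, h k, ∑ k ∈ u, h k⟫_ℂ = ∑ k ∈ u, ‖h k‖ ^ 2 := by
    rw [sum_inner, map_sum]
    refine Finset.sum_congr rfl fun i hi => ?_
    rw [inner_sum, map_sum, Finset.sum_eq_single i]
    · exact inner_self_eq_norm_sq (h i)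
    · intro j hj hne
      rw [ho i hi j hj (Ne.symm hne)]
      simp
    · intro hni; exact absurd hi hni
  rw [← key, inner_self_eq_norm_sq]

lemma aux_sq_summable [CompleteSpace H] (g : ℕ → H)
    (ho : ∀ i j, i ≠ j → ⟪g i, g j⟫_ℂ = 0) (L : H) (hg : HasSum g L) :
    Summable fun k => ‖g k‖ ^ 2 := by
  have htend : Filter.Tendsto (fun N => ∑ k ∈ Finset.range N, ‖g k‖ ^ 2)
      Filter.atTop (nhds (‖L‖ ^ 2)) := by
    have h1 := hg.tendsto_sum_nat
    have h2 : Filter.Tendsto (fun n => ‖∑ i ∈ Finset.range n, g i‖ ^ 2)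
        Filter.atTop (nhds (‖L‖ ^ 2)) := (h1.norm).pow 2
    refine h2.congr fun n => ?_
    exact aux_pyth (Finset.range n) g fun i _ j _ hij => ho i j hij
  have hmono : Monotone fun N => ∑ k ∈ Finset.range N, ‖g k‖ ^ 2 := by
    intro a b hab
    exact Finset.sum_le_sum_of_subset_of_nonneg (Finset.range_subset_range.2 hab)
      fun i _ _ => sq_nonneg _
  exact summable_of_sum_range_le (fun n => sq_nonneg _)
    (fun n => hmono.ge_of_tendsto htend n)

lemma aux_est [CompleteSpace H] (g : ℕ → H)
    (ho : ∀ i j, i ≠ j → ⟪g i, g j⟫_ℂ = 0)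
    (hsq : Summable fun k => ‖g k‖ ^ 2)
    (c : ℕ → ℂ) (hc : ∀ k, ‖c k‖ ≤ 1) (N : ℕ) (hcN : ∀ k < N, c k = 0)
    (d : H) (hd : HasSum (fun k => c k • g k) d) :
    ‖d‖ ^ 2 ≤ ∑' k, ‖g (k + N)‖ ^ 2 := by
  classical
  have hsqN : Summable fun k => ‖g (k + N)‖ ^ 2 := (summable_nat_add_iff N).2 hsq
  have key : ∀ u : Finset ℕ, ‖∑ k ∈ u, c k • g k‖ ^ 2 ≤ ∑' k, ‖g (k + N)‖ ^ 2 := by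
    intro u
    rw [aux_pyth u _ (fun i _ j _ hne => by
      rw [inner_smul_left, inner_smul_right, ho i j hne, mul_zero, mul_zero])]
    have h0 : ∀ k ∈ u \ u.filter (fun k => N ≤ k), ‖c k • g k‖ ^ 2 = 0 := by
      intro k hk
      rw [Finset.mem_sdiff, Finset.mem_filter] at hk
      have : k < N := by
        by_contra hkN
        exact hk.2 ⟨hk.1, not_lt.1 hkN⟩
      rw [hcN k this, zero_smul]
      simp
    have h1 : ∑ k ∈ u, ‖c k • g k‖ ^ 2 = ∑ k ∈ u.filter (fun k => N ≤ k), ‖c k • g k‖ ^ 2 :=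
      (Finset.sum_subset (Finset.filter_subset _ _) (fun k hk hnk =>
        h0 k (Finset.mem_sdiff.2 ⟨hk, hnk⟩))).symm
    rw [h1]
    have h2 : ∑ k ∈ u.filter (fun k => N ≤ k), ‖c k • g k‖ ^ 2 ≤
        ∑ k ∈ u.filter (fun k => N ≤ k), ‖g k‖ ^ 2 := by
      refine Finset.sum_le_sum fun k _ => ?_
      rw [norm_smul, mul_pow]
      calc ‖c k‖ ^ 2 * ‖g k‖ ^ 2 ≤ 1 * ‖g k‖ ^ 2 := by
            refine mul_le_mul_of_nonneg_right ?_ (sq_nonneg _)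
            calc ‖c k‖ ^ 2 ≤ 1 ^ 2 := pow_le_pow_left₀ (norm_nonneg _) (hc k) 2
              _ = 1 := one_pow 2
        _ = ‖g k‖ ^ 2 := one_mul _
    refine h2.trans ?_
    have h3 : ∑ k ∈ u.filter (fun k => N ≤ k), ‖g k‖ ^ 2 =
        ∑ i ∈ (u.filter (fun k => N ≤ k)).image (fun k => k - N), ‖g (i + N)‖ ^ 2 := by
      rw [Finset.sum_image]
      · refine Finset.sum_congr rfl fun k hk => ?_
        rw [Finset.mem_filter] at hk
        rw [Nat.sub_add_cancel hk.2]
      · intro a ha b hb hab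
        rw [Finset.mem_coe, Finset.mem_filter] at ha hb
        simp only at hab
        omega
    rw [h3]
    exact Summable.sum_le_tsum _ (fun i _ => sq_nonneg _) hsqN
  have htends : Filter.Tendsto (fun u : Finset ℕ => ‖∑ k ∈ u, c k • g k‖ ^ 2)
      Filter.atTop (nhds (‖d‖ ^ 2)) := (Filter.Tendsto.norm hd).pow 2
  exact le_of_tendsto' htends key

end AuxPyth

/-- The set of naturals where a boolean sequence is true. -/
def boolSet (b : ℕ → Bool) : Set ℕ := {k | b k = true}

/-- Let `(Fₙ)` be a nested cofinal sequence of entourages of `Y`, `ε > 0`, and `(tₙ)` a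
family of pairwise orthogonal contractions on `H_Y` such that `tₙ` is not
`ε`-`Fₙ`-quasi-local for every `n`.  Then there is `K ⊆ ℕ` such that the SOT-sum
`Σ_{k∈K} t_k` is not quasi-local. -/
theorem stmt13 (M : CoarseModule 𝓕 HY)
    (F : ℕ → Set (Y × Y)) (hFmem : ∀ n, F n ∈ 𝓕.ents)
    (hFnested : ∀ n, F n ⊆ F (n + 1))
    (hFcofinal : ∀ E ∈ 𝓕.ents, ∃ n, E ⊆ F n)
    (ε : ℝ) (hε : 0 < ε)
    (t : ℕ → (HY →L[ℂ] HY)) (hcontr : ∀ n, ‖t n‖ ≤ 1)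
    (horth : ∀ m n, m ≠ n →
      (t m).comp (ContinuousLinearMap.adjoint (t n)) = 0 ∧
      (ContinuousLinearMap.adjoint (t m)).comp (t n) = 0)
    (hnql : ∀ n, ¬ IsQuasiLocalWith M (t n) ε (F n)) :
    ∃ K : Set ℕ, ∀ s : HY →L[ℂ] HY,
      (∀ v : HY, HasSum (fun k : K => t k v) (s v)) → ¬ IsQuasiLocal M s := by
  classical
  by_contra hcon
  push_neg at hcon
  choose sOf hSum hQL using hcon
  -- orthogonality of vectors
  have horthv : ∀ (v w : HY) (i j : ℕ), i ≠ j → ⟪t i v, t j w⟫_ℂ = 0 := by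
    intro v w i j hij
    have h0 : (ContinuousLinearMap.adjoint (t j)).comp (t i) = 0 := (horth j i (Ne.symm hij)).2
    have h1 : ⟪(ContinuousLinearMap.adjoint (t j)) (t i v), w⟫_ℂ = ⟪t i v, t j w⟫_ℂ :=
      ContinuousLinearMap.adjoint_inner_left (t j) w (t i v)
    rw [← h1]
    have h2 : (ContinuousLinearMap.adjoint (t j)) (t i v) = 0 := by
      have := congrArg (fun f : HY →L[ℂ] HY => f v) h0
      simpa using this
    rw [h2, inner_zero_left]
  -- indicator form of the sums
  have hInd : ∀ (K : Set ℕ) (v : HY),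
      HasSum (Set.indicator K (fun k => t k v)) (sOf K v) := fun K v =>
    hasSum_subtype_iff_indicator.mp (hSum K v)
  have hgsum : ∀ v : HY, HasSum (fun k => t k v) (sOf Set.univ v) := by
    intro v
    have := hInd Set.univ v
    rwa [Set.indicator_univ] at this
  have hsq : ∀ v : HY, Summable fun k => ‖t k v‖ ^ 2 := fun v =>
    aux_sq_summable _ (fun i j hij => horthv v v i j hij) _ (hgsum v)
  -- difference estimate
  have hdiff : ∀ (K K' : Set ℕ) (N : ℕ) (v : HY), (∀ k < N, (k ∈ K ↔ k ∈ K')) →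
      ‖sOf K v - sOf K' v‖ ^ 2 ≤ ∑' k, ‖t (k + N) v‖ ^ 2 := by
    intro K K' N v hagree
    set c : ℕ → ℂ := fun k =>
      (if k ∈ K then (1 : ℂ) else 0) - (if k ∈ K' then (1 : ℂ) else 0) with hcdef
    have hsumc : HasSum (fun k => c k • t k v) (sOf K v - sOf K' v) := by
      have h12 := (hInd K v).sub (hInd K' v)
      convert h12 using 1
      funext k
      by_cases hk : k ∈ K <;> by_cases hk' : k ∈ K' <;>
        simp [c, hk, hk', Set.indicator_of_mem, Set.indicator_of_notMem, sub_smul]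
    refine aux_est _ (fun i j hij => horthv v v i j hij) (hsq v) c ?_ N ?_ _ hsumc
    · intro k
      by_cases hk : k ∈ K <;> by_cases hk' : k ∈ K' <;>
        simp [c, hk, hk', norm_one, zero_le_one]
    · intro k hkN
      have h := hagree k hkN
      by_cases hk : k ∈ K
      · simp [c, hk, h.mp hk]
      · have hk' : k ∉ K' := fun hh => hk (h.mpr hh)
        simp [c, hk, hk']
  -- continuity of b ↦ sOf (boolSet b) w
  have hcont : ∀ w : HY, Continuous fun b : ℕ → Bool => sOf (boolSet b) w := by
    intro w
    rw [continuous_iff_continuousAt]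
    intro b
    rw [ContinuousAt, Metric.tendsto_nhds]
    intro δ hδ
    obtain ⟨N, hN⟩ : ∃ N, ∑' k, ‖t (k + N) w‖ ^ 2 < δ ^ 2 := by
      have h1 := tendsto_sum_nat_add (fun k => ‖t k w‖ ^ 2)
      exact (h1.eventually_lt_const (by positivity : (0 : ℝ) < δ ^ 2)).exists
    have hmem : {b' : ℕ → Bool | ∀ k < N, b' k = b k} ∈ nhds b := by
      have heq : {b' : ℕ → Bool | ∀ k < N, b' k = b k}
          = ⋂ k ∈ Set.Iio N, {b' : ℕ → Bool | b' k = b k} := by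
        ext b'
        simp [Set.mem_iInter]
      rw [heq]
      refine (Filter.biInter_mem (Set.finite_Iio N)).2 fun k _ => ?_
      have hpre : {b' : ℕ → Bool | b' k = b k} = (fun b' : ℕ → Bool => b' k) ⁻¹' {b k} := rfl
      rw [hpre]
      exact IsOpen.mem_nhds ((isOpen_discrete {b k}).preimage (continuous_apply k)) rfl
    filter_upwards [hmem] with b' hb'
    rw [dist_eq_norm]
    have hd2 := hdiff (boolSet b') (boolSet b) N w (fun k hk => by
      simp [boolSet, hb' k hk])
    have hlt : ‖sOf (boolSet b') w - sOf (boolSet b) w‖ ^ 2 < δ ^ 2 :=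
      lt_of_le_of_lt hd2 hN
    exact lt_of_pow_lt_pow_left₀ 2 hδ.le hlt
  -- the closed pieces
  have hclosed : ∀ n, IsClosed
      {b : ℕ → Bool | IsQuasiLocalWith M (sOf (boolSet b)) (ε / 2) (F n)} := by
    intro n
    have heq : {b : ℕ → Bool | IsQuasiLocalWith M (sOf (boolSet b)) (ε / 2) (F n)} =
        ⋂ (A : Set Y) (A' : Set Y) (v : HY),
          {b : ℕ → Bool | A ∈ M.meas → A' ∈ M.meas → A' ∩ relImage (F n) A = ∅ →
            ‖M.proj A' (sOf (boolSet b) (M.proj A v))‖ ≤ ε / 2 * ‖v‖} := by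
      ext b
      simp only [Set.mem_setOf_eq, Set.mem_iInter]
      constructor
      · intro h A A' v hA hA' hdisj
        have h1 := h A hA A' hA' hdisj
        have h2 := ContinuousLinearMap.le_of_opNorm_le _ h1 v
        simpa using h2
      · intro h A hA A' hA' hdisj
        refine ContinuousLinearMap.opNorm_le_bound _ (by linarith) fun v => ?_
        simpa using h A A' v hA hA' hdisj
    rw [heq]
    refine isClosed_iInter fun A => isClosed_iInter fun A' => isClosed_iInter fun v => ?_
    by_cases hcond : A ∈ M.meas ∧ A' ∈ M.meas ∧ A' ∩ relImage (F n) A = ∅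
    · have heq2 : {b : ℕ → Bool | A ∈ M.meas → A' ∈ M.meas → A' ∩ relImage (F n) A = ∅ →
          ‖M.proj A' (sOf (boolSet b) (M.proj A v))‖ ≤ ε / 2 * ‖v‖} =
          {b : ℕ → Bool | ‖M.proj A' (sOf (boolSet b) (M.proj A v))‖ ≤ ε / 2 * ‖v‖} := by
        ext b
        exact ⟨fun h => h hcond.1 hcond.2.1 hcond.2.2, fun h _ _ _ => h⟩
      rw [heq2]
      exact isClosed_le (((M.proj A').continuous.comp (hcont (M.proj A v))).norm)
        continuous_const
    · have heq2 : {b : ℕ → Bool | A ∈ M.meas → A' ∈ M.meas → A' ∩ relImage (F n) A = ∅ →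
          ‖M.proj A' (sOf (boolSet b) (M.proj A v))‖ ≤ ε / 2 * ‖v‖} = Set.univ := by
        ext b
        simp only [Set.mem_setOf_eq, Set.mem_univ, iff_true]
        intro h1 h2 h3
        exact absurd ⟨h1, h2, h3⟩ hcond
      rw [heq2]
      exact isClosed_univ
  -- the pieces cover everything
  have hcover : ⋃ n, {b : ℕ → Bool | IsQuasiLocalWith M (sOf (boolSet b)) (ε / 2) (F n)}
      = Set.univ := by
    ext b
    simp only [Set.mem_iUnion, Set.mem_univ, iff_true, Set.mem_setOf_eq]
    obtain ⟨F', hF'mem, hF'⟩ := hQL (boolSet b) (ε / 2) (by linarith)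
    obtain ⟨n, hn⟩ := hFcofinal F' hF'mem
    refine ⟨n, fun A hA A' hA' hdisj => hF' A hA A' hA' ?_⟩
    rw [Set.eq_empty_iff_forall_notMem] at hdisj ⊢
    rintro y ⟨hy1, x, hx, hxy⟩
    exact hdisj y ⟨hy1, x, hx, hn hxy⟩
  -- Baire category
  haveI : BaireSpace (ℕ → Bool) := by
    letI := TopologicalSpace.upgradeIsCompletelyMetrizable (ℕ → Bool)
    infer_instance
  obtain ⟨n, hn⟩ := nonempty_interior_of_iUnion_of_closed hclosed hcover
  obtain ⟨b₀, hb₀⟩ := hn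
  obtain ⟨I, u, hIu, hpi⟩ := isOpen_pi_iff.1 isOpen_interior b₀ hb₀
  set m := max n (I.sup _root_.id + 1) with hm
  have hmI : m ∉ I := by
    intro hmem
    have h1 : m ≤ I.sup _root_.id := Finset.le_sup (f := _root_.id) hmem
    have h2 : I.sup _root_.id + 1 ≤ m := le_max_right _ _
    omega
  have hnm : n ≤ m := le_max_left _ _
  set b₁ : ℕ → Bool := Function.update b₀ m false with hb₁
  set b₂ : ℕ → Bool := Function.update b₀ m true with hb₂
  have hmem1 : b₁ ∈ (↑I : Set ℕ).pi u := by
    intro i hi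
    have hne : i ≠ m := fun h => hmI (h ▸ hi)
    rw [hb₁, Function.update_of_ne hne]
    exact (hIu i hi).2
  have hmem2 : b₂ ∈ (↑I : Set ℕ).pi u := by
    intro i hi
    have hne : i ≠ m := fun h => hmI (h ▸ hi)
    rw [hb₂, Function.update_of_ne hne]
    exact (hIu i hi).2
  have hQ1 : IsQuasiLocalWith M (sOf (boolSet b₁)) (ε / 2) (F n) :=
    interior_subset (hpi hmem1)
  have hQ2 : IsQuasiLocalWith M (sOf (boolSet b₂)) (ε / 2) (F n) :=
    interior_subset (hpi hmem2)
  -- the operator relation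
  have hmK : m ∉ boolSet b₁ := by
    simp [boolSet, hb₁, Function.update_self]
  have hrel : ∀ v : HY, sOf (boolSet b₂) v = sOf (boolSet b₁) v + t m v := by
    intro v
    have h2 := hInd (boolSet b₂) v
    have h3 : HasSum (fun k => Set.indicator (boolSet b₁) (fun k => t k v) k
        + (if k = m then t m v else 0)) (sOf (boolSet b₁) v + t m v) :=
      (hInd (boolSet b₁) v).add (hasSum_ite_eq m (t m v))
    have heqf : (fun k => Set.indicator (boolSet b₁) (fun k => t k v) k
        + (if k = m then t m v else 0)) = Set.indicator (boolSet b₂) (fun k => t k v) := by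
      funext k
      by_cases hk : k = m
      · subst hk
        rw [Set.indicator_of_notMem hmK,
          Set.indicator_of_mem (show m ∈ boolSet b₂ by simp [boolSet, hb₂]),
          if_pos rfl, zero_add]
      · rw [if_neg hk, add_zero]
        have hsame : k ∈ boolSet b₂ ↔ k ∈ boolSet b₁ := by
          simp [boolSet, hb₁, hb₂, Function.update_of_ne hk]
        by_cases hk2 : k ∈ boolSet b₁
        · rw [Set.indicator_of_mem hk2, Set.indicator_of_mem (hsame.mpr hk2)]
        · rw [Set.indicator_of_notMem hk2,
            Set.indicator_of_notMem (fun h => hk2 (hsame.mp h))]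
    rw [heqf] at h3
    exact h2.unique h3
  -- monotonicity of F
  have hFmono : ∀ {a b : ℕ}, a ≤ b → F a ⊆ F b := by
    intro a b hab
    induction hab with
    | refl => exact subset_rfl
    | step _ ih => exact Set.Subset.trans ih (hFnested _)
  -- derive quasi-locality of t m, contradiction
  refine hnql m fun A hA A' hA' hdisj => ?_
  have hdisj' : A' ∩ relImage (F n) A = ∅ := by
    rw [Set.eq_empty_iff_forall_notMem] at hdisj ⊢
    rintro y ⟨hy1, x, hx, hxy⟩
    exact hdisj y ⟨hy1, x, hx, hFmono hnm hxy⟩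
  have e1 := hQ2 A hA A' hA' hdisj'
  have e2 := hQ1 A hA A' hA' hdisj'
  have hop : (M.proj A').comp ((t m).comp (M.proj A)) =
      (M.proj A').comp ((sOf (boolSet b₂)).comp (M.proj A))
      - (M.proj A').comp ((sOf (boolSet b₁)).comp (M.proj A)) := by
    ext v
    simp only [ContinuousLinearMap.comp_apply, ContinuousLinearMap.sub_apply]
    rw [hrel (M.proj A v), map_add]
    abel
  rw [hop]
  refine (norm_sub_le _ _).trans ?_
  linarith
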